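/- A triangulation of a convex (n+2)-gon fixed by rotation through angle π exists only if n+2 is even, and such a triangulation must contain a diameter (a diagonal connecting two antipodal vertices i and i+(n+2)/2). -/

import Mathlib

/-- The unordered pair `{a,b}` written as an ordered pair with smaller entry first. -/
def opair {m : ℕ} (a b : Fin m) : Fin m × Fin m := if a ≤ b then (a, b) else (b, a)

/-- `d` is a diagonal of the convex `(n+2)`-gon with vertices `0, …, n+1` (in cyclic order):
its endpoints are distinct, non-adjacent vertices, written in increasing order. -/
def IsDiagonal (n : ℕ) (d : Fin (n + 2) × Fin (n + 2)) : Prop :=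
  d.1 < d.2 ∧ (d.1 : ℕ) + 1 < (d.2 : ℕ) ∧ ¬((d.1 : ℕ) = 0 ∧ (d.2 : ℕ) = n + 1)

/-- Two diagonals (each written with increasing endpoints) cross in the interior. -/
def Crossing {m : ℕ} (d e : Fin m × Fin m) : Prop :=
  (d.1 < e.1 ∧ e.1 < d.2 ∧ d.2 < e.2) ∨ (e.1 < d.1 ∧ d.1 < e.2 ∧ e.2 < d.2)

/-- A triangulation of the convex `(n+2)`-gon: a maximal set of pairwise non-crossing
diagonals (which divides the polygon into `n` triangles). -/
structure Triangulation (n : ℕ) where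
  diags : Finset (Fin (n + 2) × Fin (n + 2))
  isDiag : ∀ d ∈ diags, IsDiagonal n d
  noncross : ∀ d ∈ diags, ∀ e ∈ diags, ¬ Crossing d e
  maximal : ∀ d, IsDiagonal n d → (∀ e ∈ diags, ¬ Crossing d e) → d ∈ diags

/-- The effect of rotating the polygon by `k` steps on a diagonal. -/
def rotp {m : ℕ} (k : Fin m) (d : Fin m × Fin m) : Fin m × Fin m :=
  opair (d.1 + k) (d.2 + k)

lemma rotp_val {m : ℕ} (k : Fin m) (d : Fin m × Fin m) :
    (((rotp k d).1 : ℕ) = ((d.1 : ℕ) + (k : ℕ)) % m ∧ ((rotp k d).2 : ℕ) = ((d.2 : ℕ) + (k : ℕ)) % m) ∨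
    (((rotp k d).1 : ℕ) = ((d.2 : ℕ) + (k : ℕ)) % m ∧ ((rotp k d).2 : ℕ) = ((d.1 : ℕ) + (k : ℕ)) % m) := by
  unfold rotp opair
  split <;> simp [Fin.val_add]

set_option maxHeartbeats 2000000 in
/-- A triangulation of a convex `(n+2)`-gon fixed by rotation through the angle `π`
(i.e. by `k` steps where `2k = n+2`) exists only if `n+2` is even, and such a
triangulation must contain a diameter: a diagonal connecting two antipodal vertices
`i` and `i + (n+2)/2`. -/
theorem fixed_by_halfturn_has_diameter (n : ℕ) (hn : 2 ≤ n) (T : Triangulation n)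
    (k : Fin (n + 2)) (hk : 2 * (k : ℕ) = n + 2)
    (hT : T.diags.image (rotp k) = T.diags) :
    2 ∣ (n + 2) ∧ ∃ d ∈ T.diags, (d.2 : ℕ) = (d.1 : ℕ) + (n + 2) / 2 := by
  have hkv : 2 ≤ (k : ℕ) := by omega
  have hhalf : (n + 2) / 2 = (k : ℕ) := by omega
  refine ⟨⟨(k : ℕ), hk.symm⟩, ?_⟩
  by_contra hcon
  push_neg at hcon
  rw [hhalf] at hcon
  -- arithmetic helpers for reducing `% (n+2)`
  have hmodlt : ∀ x : ℕ, x < n + 2 → x % (n + 2) = x := fun x hx => Nat.mod_eq_of_lt hx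
  have hmodge : ∀ x : ℕ, n + 2 ≤ x → x < 2 * (n + 2) → x % (n + 2) = x - (n + 2) := by
    intro x h1 h2
    rw [Nat.mod_eq_sub_mod h1, Nat.mod_eq_of_lt (by omega)]
  have rotmem : ∀ e ∈ T.diags, rotp k e ∈ T.diags := by
    intro e he
    rw [← hT]
    exact Finset.mem_image_of_mem _ he
  have hdiag : ∀ f ∈ T.diags,
      (f.1 : ℕ) < (f.2 : ℕ) ∧ (f.1 : ℕ) + 1 < (f.2 : ℕ) ∧ ¬((f.1 : ℕ) = 0 ∧ (f.2 : ℕ) = n + 1) := by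
    intro f hf
    obtain ⟨h1, h2, h3⟩ := T.isDiag f hf
    exact ⟨Fin.lt_def.mp h1, h2, h3⟩
  -- if some diameter crosses nothing, contradiction
  have diam_in : ∀ a : Fin (n + 2), (a : ℕ) < (k : ℕ) →
      (∀ f ∈ T.diags, ¬ Crossing (a, a + k) f) → False := by
    intro a ha hcr
    have hval : ((a + k : Fin (n + 2)) : ℕ) = (a : ℕ) + (k : ℕ) := by
      rw [Fin.val_add, Nat.mod_eq_of_lt (by omega)]
    have hd : IsDiagonal n (a, a + k) := by
      simp only [IsDiagonal, Fin.lt_def, hval]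
      omega
    exact hcon _ (T.maximal _ hd hcr) hval
  rcases T.diags.eq_empty_or_nonempty with hE | hNE
  · refine diam_in 0 (by show ((0 : Fin (n + 2)) : ℕ) < (k : ℕ); rw [Fin.val_zero]; omega) ?_
    intro f hf
    rw [hE] at hf
    simp at hf
  -- rotating a "long" diagonal gives a "short" one
  have rot_small : ∀ f ∈ T.diags, (f.1 : ℕ) + (k : ℕ) < (f.2 : ℕ) →
      ∃ g ∈ T.diags, (g.2 : ℕ) < (g.1 : ℕ) + (k : ℕ) ∧
        (g.2 : ℕ) - (g.1 : ℕ) = (n + 2) - ((f.2 : ℕ) - (f.1 : ℕ)) := by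
    intro f hf hbig
    refine ⟨rotp k f, rotmem f hf, ?_⟩
    obtain ⟨hg1, hg2, hg3⟩ := hdiag _ (rotmem f hf)
    have h2 : (f.2 : ℕ) < n + 2 := f.2.isLt
    have hm1 := hmodlt ((f.1 : ℕ) + (k : ℕ)) (by omega)
    have hm2 := hmodge ((f.2 : ℕ) + (k : ℕ)) (by omega) (by omega)
    rcases rotp_val k f with ⟨ha, hb⟩ | ⟨ha, hb⟩ <;> constructor <;> omega
  set S := T.diags.filter (fun f => (f.2 : ℕ) < (f.1 : ℕ) + (k : ℕ)) with hS
  have hSmem : ∀ g, g ∈ T.diags → (g.2 : ℕ) < (g.1 : ℕ) + (k : ℕ) → g ∈ S := by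
    intro g h1 h2
    rw [hS, Finset.mem_filter]
    exact ⟨h1, h2⟩
  have hSsub : ∀ g ∈ S, g ∈ T.diags ∧ (g.2 : ℕ) < (g.1 : ℕ) + (k : ℕ) := by
    intro g hg
    rw [hS, Finset.mem_filter] at hg
    exact hg
  have hSne : S.Nonempty := by
    obtain ⟨f, hf⟩ := hNE
    rcases lt_or_ge (f.2 : ℕ) ((f.1 : ℕ) + (k : ℕ)) with hlt | hge
    · exact ⟨f, hSmem f hf hlt⟩
    · have hne := hcon f hf
      obtain ⟨g, hg, hg2, _⟩ := rot_small f hf (by omega)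
      exact ⟨g, hSmem g hg hg2⟩
  obtain ⟨e, heS, hemax⟩ := S.exists_max_image (fun f => (f.2 : ℕ) - (f.1 : ℕ)) hSne
  have Gmax : ∀ f ∈ T.diags, (f.2 : ℕ) - (f.1 : ℕ) ≤ (e.2 : ℕ) - (e.1 : ℕ) ∨
      (n + 2) - ((f.2 : ℕ) - (f.1 : ℕ)) ≤ (e.2 : ℕ) - (e.1 : ℕ) := by
    intro f hf
    rcases lt_or_ge (f.2 : ℕ) ((f.1 : ℕ) + (k : ℕ)) with hlt | hge
    · exact Or.inl (hemax f (hSmem f hf hlt))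
    · have hne := hcon f hf
      obtain ⟨g, hg, hg2, hg3⟩ := rot_small f hf (by omega)
      right
      rw [← hg3]
      exact hemax g (hSmem g hg hg2)
  -- get a max-gap short diagonal with first endpoint < k
  obtain ⟨ε, hεT, hεS2, hεgap, hεa⟩ : ∃ ε, ε ∈ T.diags ∧ (ε.2 : ℕ) < (ε.1 : ℕ) + (k : ℕ) ∧
      (ε.2 : ℕ) - (ε.1 : ℕ) = (e.2 : ℕ) - (e.1 : ℕ) ∧ (ε.1 : ℕ) < (k : ℕ) := by
    obtain ⟨heT, he2⟩ := hSsub e heS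
    obtain ⟨he1, _, _⟩ := hdiag e heT
    rcases lt_or_ge (e.1 : ℕ) (k : ℕ) with h | h
    · exact ⟨e, heT, he2, rfl, h⟩
    · obtain ⟨hg1, hg2, hg3⟩ := hdiag _ (rotmem e heT)
      have i1 : (e.1 : ℕ) < n + 2 := e.1.isLt
      have i2 : (e.2 : ℕ) < n + 2 := e.2.isLt
      have hm1 := hmodge ((e.1 : ℕ) + (k : ℕ)) (by omega) (by omega)
      have hm2 := hmodge ((e.2 : ℕ) + (k : ℕ)) (by omega) (by omega)
      rcases rotp_val k e with ⟨ha, hb⟩ | ⟨ha, hb⟩ <;>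
        exact ⟨rotp k e, rotmem e heT, by omega, by omega, by omega⟩
  -- compute the rotation of ε
  obtain ⟨hε1, hε2, hε3⟩ := hdiag ε hεT
  have iε2 : (ε.2 : ℕ) < n + 2 := ε.2.isLt
  obtain ⟨hr1, hr2, hr3⟩ := hdiag _ (rotmem ε hεT)
  have hrot : (((rotp k ε).1 : ℕ) = (ε.1 : ℕ) + (k : ℕ) ∧
        ((rotp k ε).2 : ℕ) = (ε.2 : ℕ) + (k : ℕ)) ∨
      ((k : ℕ) ≤ (ε.2 : ℕ) ∧ ((rotp k ε).1 : ℕ) = (ε.2 : ℕ) - (k : ℕ) ∧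
        ((rotp k ε).2 : ℕ) = (ε.1 : ℕ) + (k : ℕ)) := by
    rcases lt_or_ge (ε.2 : ℕ) (k : ℕ) with hB | hB
    · left
      have hm1 := hmodlt ((ε.1 : ℕ) + (k : ℕ)) (by omega)
      have hm2 := hmodlt ((ε.2 : ℕ) + (k : ℕ)) (by omega)
      rcases rotp_val k ε with ⟨ha, hb⟩ | ⟨ha, hb⟩ <;> exact ⟨by omega, by omega⟩
    · right
      have hm1 := hmodlt ((ε.1 : ℕ) + (k : ℕ)) (by omega)
      have hm2 := hmodge ((ε.2 : ℕ) + (k : ℕ)) (by omega) (by omega)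
      rcases rotp_val k ε with ⟨ha, hb⟩ | ⟨ha, hb⟩ <;> exact ⟨hB, by omega, by omega⟩
  -- the diameter through ε.1 crosses nothing
  refine diam_in ε.1 hεa ?_
  intro f hf hcr
  obtain ⟨hf1, hf2, hf3⟩ := hdiag f hf
  have if2 : (f.2 : ℕ) < n + 2 := f.2.isLt
  have hnc1 : ¬ Crossing ε f := T.noncross ε hεT f hf
  have hnc2 : ¬ Crossing (rotp k ε) f := T.noncross _ (rotmem ε hεT) f hf
  have hG := Gmax f hf
  have hval : ((ε.1 + k : Fin (n + 2)) : ℕ) = (ε.1 : ℕ) + (k : ℕ) := by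
    rw [Fin.val_add, Nat.mod_eq_of_lt (by omega)]
  simp only [Crossing, Fin.lt_def] at hcr hnc1 hnc2
  rw [hval] at hcr
  rcases hrot with ⟨ha, hb⟩ | ⟨hB, ha, hb⟩ <;> rw [ha, hb] at hnc2 <;> omega
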